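/- Let L and M be monic n×n matrix polynomials of degree ℓ, and suppose there exist real symmetric nℓ×nℓ matrices A and B such that for every real α the multiset of roots of det(αL(z) + (1−α)M(z)) equals the multiset of eigenvalues of αA + (1−α)B. Then for every α ∈ [0,1] the largest root of det(αL(z) + (1−α)M(z)) is at most α·(largest root of det L) + (1−α)·(largest root of det M). -/
import Mathlib


open Matrix Polynomial

/-- The monic `n × n` matrix polynomial `z^ℓ I + Σ_{j<ℓ} z^j L_j`, as a matrix with
polynomial entries. -/
noncomputable def matPoly (n ℓ : ℕ) (Lc : Fin ℓ → Matrix (Fin n) (Fin n) ℝ) :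
    Matrix (Fin n) (Fin n) (Polynomial ℝ) :=
  Matrix.of fun i k =>
    X ^ ℓ * (if i = k then 1 else 0) + ∑ j : Fin ℓ, C (Lc j i k) * X ^ (j : ℕ)

lemma eval_charpoly' {m : Type*} [Fintype m] [DecidableEq m] (S : Matrix m m ℝ) (x : ℝ) :
    (S.charpoly).eval x = (x • (1 : Matrix m m ℝ) - S).det := by
  rw [Matrix.charpoly, ← Polynomial.coe_evalRingHom, RingHom.map_det]
  congr 1
  ext i j
  by_cases h : i = j <;>
    simp [Matrix.charmatrix_apply, Matrix.diagonal_apply, Matrix.one_apply, h]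

lemma eigenvalue_mem_roots {m : Type*} [Fintype m] [DecidableEq m] {S : Matrix m m ℝ}
    (hS : S.IsHermitian) (i : m) : hS.eigenvalues i ∈ S.charpoly.roots := by
  rw [Polynomial.mem_roots']
  refine ⟨(Matrix.charpoly_monic S).ne_zero, ?_⟩
  rw [Polynomial.IsRoot, eval_charpoly']
  refine Matrix.exists_mulVec_eq_zero_iff.mp ⟨⇑(hS.eigenvectorBasis i), ?_, ?_⟩
  · intro h
    exact (hS.eigenvectorBasis.toBasis.ne_zero i) (by ext j; exact congrFun h j)
  · rw [Matrix.sub_mulVec, Matrix.smul_mulVec, Matrix.one_mulVec,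
      hS.mulVec_eigenvectorBasis, sub_self]

lemma rayleigh_bound {m : Type*} [Fintype m] [DecidableEq m] {S : Matrix m m ℝ}
    (hS : S.IsHermitian) {c : ℝ} (hc : ∀ i, hS.eigenvalues i ≤ c) (v : m → ℝ) :
    v ⬝ᵥ (S *ᵥ v) ≤ c * (v ⬝ᵥ v) := by
  set U : Matrix m m ℝ := (hS.eigenvectorUnitary : Matrix m m ℝ) with hU
  have hstar : star U = Uᵀ := by
    rw [Matrix.star_eq_conjTranspose, Matrix.conjTranspose_eq_transpose_of_trivial]
  set w : m → ℝ := Uᵀ *ᵥ v with hw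
  have hdot : ∀ x : m → ℝ, v ⬝ᵥ (U *ᵥ x) = w ⬝ᵥ x := by
    intro x
    rw [Matrix.dotProduct_mulVec, hw, Matrix.mulVec_transpose]
  have hdiag : S = U * Matrix.diagonal hS.eigenvalues * star U := by
    have := hS.spectral_theorem
    simpa using this
  have key : v ⬝ᵥ (S *ᵥ v) = w ⬝ᵥ (Matrix.diagonal hS.eigenvalues *ᵥ w) := by
    conv_lhs => rw [hdiag]
    rw [← Matrix.mulVec_mulVec, ← Matrix.mulVec_mulVec, hdot, hstar]
  have hww : w ⬝ᵥ w = v ⬝ᵥ v := by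
    have h1 : U * star U = 1 := Matrix.mem_unitaryGroup_iff.mp hS.eigenvectorUnitary.2
    calc w ⬝ᵥ w = v ⬝ᵥ (U *ᵥ w) := (hdot w).symm
      _ = v ⬝ᵥ ((U * star U) *ᵥ v) := by rw [← Matrix.mulVec_mulVec, hstar]
      _ = v ⬝ᵥ v := by rw [h1, Matrix.one_mulVec]
  rw [key, ← hww]
  unfold dotProduct
  rw [Finset.mul_sum]
  refine Finset.sum_le_sum fun i _ => ?_
  rw [Matrix.mulVec_diagonal]
  have : w i * (hS.eigenvalues i * w i) = hS.eigenvalues i * (w i * w i) := by ring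
  rw [this]
  exact mul_le_mul_of_nonneg_right (hc i) (mul_self_nonneg _)

/-- If for every real `α` the roots of `det(αL(z)+(1-α)M(z))` coincide (as multisets) with
the eigenvalues of `αA + (1-α)B` for fixed real symmetric `A`, `B`, then for `α ∈ [0,1]`
the largest root of `det(αL(z)+(1-α)M(z))` is at most
`α·(largest root of det L) + (1-α)·(largest root of det M)`. -/
theorem largest_root_convexity (n ℓ : ℕ) (hn : 0 < n) (hℓ : 0 < ℓ)
    (Lc Mc : Fin ℓ → Matrix (Fin n) (Fin n) ℝ)
    (A B : Matrix (Fin (n * ℓ)) (Fin (n * ℓ)) ℝ) (hA : A.IsSymm) (hB : B.IsSymm)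
    (hroots : ∀ α : ℝ,
      (C α • matPoly n ℓ Lc + C (1 - α) • matPoly n ℓ Mc).det.roots =
        ((α • A + (1 - α) • B).charpoly).roots) :
    ∀ α ∈ Set.Icc (0 : ℝ) 1,
      ∀ x ∈ (C α • matPoly n ℓ Lc + C (1 - α) • matPoly n ℓ Mc).det.roots,
        ∀ aM bM : ℝ,
          aM ∈ (matPoly n ℓ Lc).det.roots →
          (∀ a ∈ (matPoly n ℓ Lc).det.roots, a ≤ aM) →
          bM ∈ (matPoly n ℓ Mc).det.roots →
          (∀ b ∈ (matPoly n ℓ Mc).det.roots, b ≤ bM) →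
          x ≤ α * aM + (1 - α) * bM := by
  rintro α ⟨hα0, hα1⟩ x hx aM bM haM haMb hbM hbMb
  have hAh : A.IsHermitian := by
    rw [Matrix.IsHermitian, Matrix.conjTranspose_eq_transpose_of_trivial]; exact hA
  have hBh : B.IsHermitian := by
    rw [Matrix.IsHermitian, Matrix.conjTranspose_eq_transpose_of_trivial]; exact hB
  -- identify roots of det L with charpoly A, det M with charpoly B
  have hLA : (matPoly n ℓ Lc).det.roots = A.charpoly.roots := by
    have h := hroots 1
    have e1 : Polynomial.C (1:ℝ) • matPoly n ℓ Lc + Polynomial.C (1-1:ℝ) • matPoly n ℓ Mc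
        = matPoly n ℓ Lc := by norm_num
    have e2 : (1:ℝ) • A + (1-1:ℝ) • B = A := by norm_num
    rwa [e1, e2] at h
  have hMB : (matPoly n ℓ Mc).det.roots = B.charpoly.roots := by
    have h := hroots 0
    have e1 : Polynomial.C (0:ℝ) • matPoly n ℓ Lc + Polynomial.C (1-0:ℝ) • matPoly n ℓ Mc
        = matPoly n ℓ Mc := by norm_num
    have e2 : (0:ℝ) • A + (1-0:ℝ) • B = B := by norm_num
    rwa [e1, e2] at h
  have hAev : ∀ i, hAh.eigenvalues i ≤ aM := fun i =>
    haMb _ (by rw [hLA]; exact eigenvalue_mem_roots hAh i)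
  have hBev : ∀ i, hBh.eigenvalues i ≤ bM := fun i =>
    hbMb _ (by rw [hMB]; exact eigenvalue_mem_roots hBh i)
  -- x is an eigenvalue of S = α A + (1-α) B
  set S : Matrix (Fin (n * ℓ)) (Fin (n * ℓ)) ℝ := α • A + (1 - α) • B with hSdef
  have hxS : x ∈ S.charpoly.roots := by rw [← hroots α]; exact hx
  have hdet : (x • (1 : Matrix (Fin (n * ℓ)) (Fin (n * ℓ)) ℝ) - S).det = 0 := by
    rw [← eval_charpoly']
    exact (Polynomial.mem_roots'.mp hxS).2
  obtain ⟨v, hv0, hv⟩ := Matrix.exists_mulVec_eq_zero_iff.mpr hdet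
  have hSv : S *ᵥ v = x • v := by
    have := hv
    rw [Matrix.sub_mulVec, Matrix.smul_mulVec, Matrix.one_mulVec, sub_eq_zero] at this
    exact this.symm
  have hvpos : 0 < v ⬝ᵥ v :=
    lt_of_le_of_ne (Finset.sum_nonneg fun i _ => mul_self_nonneg _)
      (fun h => hv0 (dotProduct_self_eq_zero.mp h.symm))
  have hquad : x * (v ⬝ᵥ v) ≤ (α * aM + (1 - α) * bM) * (v ⬝ᵥ v) := by
    have lhs_eq : v ⬝ᵥ (S *ᵥ v) = x * (v ⬝ᵥ v) := by
      rw [hSv, dotProduct_smul, smul_eq_mul]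
    have expand : v ⬝ᵥ (S *ᵥ v) = α * (v ⬝ᵥ (A *ᵥ v)) + (1 - α) * (v ⬝ᵥ (B *ᵥ v)) := by
      rw [hSdef, Matrix.add_mulVec, Matrix.smul_mulVec, Matrix.smul_mulVec,
        dotProduct_add, dotProduct_smul, dotProduct_smul,
        smul_eq_mul, smul_eq_mul]
    have bA := rayleigh_bound hAh hAev v
    have bB := rayleigh_bound hBh hBev v
    calc x * (v ⬝ᵥ v) = α * (v ⬝ᵥ (A *ᵥ v)) + (1 - α) * (v ⬝ᵥ (B *ᵥ v)) := by
          rw [← lhs_eq, expand]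
      _ ≤ α * (aM * (v ⬝ᵥ v)) + (1 - α) * (bM * (v ⬝ᵥ v)) :=
          add_le_add (mul_le_mul_of_nonneg_left bA hα0)
            (mul_le_mul_of_nonneg_left bB (by linarith))
      _ = (α * aM + (1 - α) * bM) * (v ⬝ᵥ v) := by ring
  exact le_of_mul_le_mul_right hquad hvpos
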